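/- With A = μ̄(1-μ̲), B = μ̲(1-μ̄), μ̄ + μ̲ > 1, the functions φ(γ) = (γA-B)(γB-A)/((γ²-1)μ̲(1-μ̲)(A+B)) and g(γ) = (γ-1)/(2(γ+1)) satisfy: φ(γ)/g(γ) is strictly increasing on (A/B, ∞), with derivative d/dγ [φ(γ)/g(γ)] = 2(A-B)²(γ+1)/(μ̲(1-μ̲)(A+B)(γ-1)³) > 0. -/

import Mathlib

/-- With A = μ̄(1-μ̲), B = μ̲(1-μ̄) and μ̄ + μ̲ > 1, the ratio φ/g is strictly
increasing on (A/B, ∞), with derivative 2(A-B)²(γ+1)/(μ̲(1-μ̲)(A+B)(γ-1)³) > 0. -/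
theorem stmt_9 (μl μh : ℝ) (h0 : 0 < μl) (hlh : μl < μh) (h1 : μh < 1)
    (hsum : 1 < μh + μl)
    (A B : ℝ) (hA : A = μh * (1 - μl)) (hB : B = μl * (1 - μh))
    (φ g : ℝ → ℝ)
    (hφ : ∀ γ : ℝ, φ γ = (γ * A - B) * (γ * B - A) / ((γ ^ 2 - 1) * (μl * (1 - μl)) * (A + B)))
    (hg : ∀ γ : ℝ, g γ = (γ - 1) / (2 * (γ + 1))) :
    StrictMonoOn (fun γ => φ γ / g γ) (Set.Ioi (A / B)) ∧
    ∀ γ : ℝ, A / B < γ →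
      deriv (fun γ => φ γ / g γ) γ
        = 2 * (A - B) ^ 2 * (γ + 1) / (μl * (1 - μl) * (A + B) * (γ - 1) ^ 3) ∧
      0 < deriv (fun γ => φ γ / g γ) γ := by
  have hμ1 : 0 < 1 - μl := by linarith
  have hμh1 : 0 < 1 - μh := by linarith
  have hμh0 : 0 < μh := lt_trans h0 hlh
  have hB0 : 0 < B := by rw [hB]; positivity
  have hA0 : 0 < A := by rw [hA]; positivity
  have hBA : B < A := by nlinarith
  have hAB1 : 1 < A / B := (one_lt_div hB0).mpr hBA
  have hABpos : 0 < A + B := by linarith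
  set c : ℝ := μl * (1 - μl) * (A + B) with hc
  have hc0 : 0 < c := by positivity
  set F : ℝ → ℝ := fun γ => 2 * ((γ * A - B) * (γ * B - A)) / (c * (γ - 1) ^ 2) with hF
  -- key : for each γ in the domain, φ/g has the claimed positive derivative
  have key : ∀ γ : ℝ, A / B < γ →
      HasDerivAt (fun γ => φ γ / g γ)
        (2 * (A - B) ^ 2 * (γ + 1) / (μl * (1 - μl) * (A + B) * (γ - 1) ^ 3)) γ := by
    intro γ hγ
    have hγ1 : 1 < γ := lt_trans hAB1 hγ
    have hγm : γ - 1 ≠ 0 := by linarith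
    have hγp : γ + 1 ≠ 0 := by linarith
    have hγ2 : γ ^ 2 - 1 ≠ 0 := by nlinarith
    have hd0 : c * (γ - 1) ^ 2 ≠ 0 := by positivity
    have hn : HasDerivAt (fun γ => 2 * ((γ * A - B) * (γ * B - A)))
        (2 * (A * (γ * B - A) + (γ * A - B) * B)) γ := by
      have h1 : HasDerivAt (fun γ : ℝ => γ * A - B) A γ := by
        simpa using ((hasDerivAt_id γ).mul_const A).sub_const B
      have h2 : HasDerivAt (fun γ : ℝ => γ * B - A) B γ := by
        simpa using ((hasDerivAt_id γ).mul_const B).sub_const A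
      simpa [mul_comm, mul_assoc, mul_left_comm] using (h1.mul h2).const_mul 2
    have hd : HasDerivAt (fun γ : ℝ => c * (γ - 1) ^ 2) (c * (2 * (γ - 1))) γ := by
      have h3 : HasDerivAt (fun γ : ℝ => (γ - 1) ^ 2) (2 * (γ - 1)) γ := by
        simpa using ((hasDerivAt_id γ).sub_const 1).fun_pow 2
      simpa using h3.const_mul c
    have hF' : HasDerivAt F
        ((2 * (A * (γ * B - A) + (γ * A - B) * B) * (c * (γ - 1) ^ 2)
          - 2 * ((γ * A - B) * (γ * B - A)) * (c * (2 * (γ - 1)))) / (c * (γ - 1) ^ 2) ^ 2) γ :=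
      hn.div hd hd0
    have heq : (2 * (A * (γ * B - A) + (γ * A - B) * B) * (c * (γ - 1) ^ 2)
          - 2 * ((γ * A - B) * (γ * B - A)) * (c * (2 * (γ - 1)))) / (c * (γ - 1) ^ 2) ^ 2
        = 2 * (A - B) ^ 2 * (γ + 1) / (μl * (1 - μl) * (A + B) * (γ - 1) ^ 3) := by
      rw [hc]
      have hμl : μl * (1 - μl) ≠ 0 := by positivity
      have hAB : A + B ≠ 0 := ne_of_gt hABpos
      field_simp
      ring
    rw [heq] at hF'
    refine hF'.congr_of_eventuallyEq ?_
    have hmem : Set.Ioi (A / B) ∈ nhds γ := (isOpen_Ioi).mem_nhds hγ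
    filter_upwards [hmem] with x hx
    have hx1 : 1 < x := lt_trans hAB1 hx
    have hxm : x - 1 ≠ 0 := by linarith
    have hxp : x + 1 ≠ 0 := by linarith
    have hx2 : x ^ 2 - 1 ≠ 0 := by nlinarith
    have hμl : μl * (1 - μl) ≠ 0 := by positivity
    have hAB : A + B ≠ 0 := ne_of_gt hABpos
    rw [hφ, hg, hF, hc]
    field_simp
    ring
  have hpos : ∀ γ : ℝ, A / B < γ →
      0 < 2 * (A - B) ^ 2 * (γ + 1) / (μl * (1 - μl) * (A + B) * (γ - 1) ^ 3) := by
    intro γ hγ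
    have hγ1 : 1 < γ := lt_trans hAB1 hγ
    have hABne : A - B ≠ 0 := by linarith
    have h1 : (0:ℝ) < γ - 1 := by linarith
    have h2 : (0:ℝ) < γ + 1 := by linarith
    positivity
  constructor
  · apply strictMonoOn_of_deriv_pos (convex_Ioi (A / B))
    · intro γ hγ
      exact ((key γ hγ).differentiableAt.continuousAt).continuousWithinAt
    · intro γ hγ
      rw [interior_Ioi] at hγ
      rw [(key γ hγ).deriv]
      exact hpos γ hγ
  · intro γ hγ
    rw [(key γ hγ).deriv]
    exact ⟨rfl, hpos γ hγ⟩
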